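/- Let $4\le N\le 8$ and $0<z_R<1$. Suppose $\phi_1\in C^2([0,\xi_R])$ satisfies $-\phi_1''+Q\phi_1=\lambda_1\phi_1$ on $(0,\xi_R)$ with $\phi_1>0$ on $(0,\xi_R)$, $\phi_1(\xi_R)=0$, $\phi_1'(\xi_R)<0$, where $Q$ is the Liouville potential and $\eta_1(\xi)=z^{(N-1)/4}(1-z)^{(9-N)/4}$ (with $z=z(\xi)$) satisfies $-\eta_1''+Q\eta_1=\hat q\ge 0$ on $(0,\xi_R)$, $\eta_1(0)=\eta_1'(0)=0$, $\eta_1>0$ on $(0,\xi_R]$. Then $\lambda_1>0$. -/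

import Mathlib

open Real

theorem stmt_6 (N zR ξR lam1 : ℝ) (φ1 η1 Q qhat zOf : ℝ → ℝ)
    (hN1 : 4 ≤ N) (hN2 : N ≤ 8) (hzR0 : 0 < zR) (hzR1 : zR < 1)
    (hξR : ξR = ∫ z in (0:ℝ)..zR, Real.sqrt ((1 - z) / z))
    (hξRpos : 0 < ξR)
    (hzOf : ∀ ξ ∈ Set.Ioo (0 : ℝ) ξR, zOf ξ ∈ Set.Ioo (0 : ℝ) 1 ∧
      Real.sqrt (zOf ξ * (1 - zOf ξ)) + Real.arctan (Real.sqrt (zOf ξ / (1 - zOf ξ))) = ξ)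
    (hQ : ∀ ξ ∈ Set.Ioo (0 : ℝ) ξR,
      Q ξ = 1 / (zOf ξ * (1 - zOf ξ) ^ 3) *
        ((N - 1) * (N - 3) / 16 + (7 - 2 * N) / 2 * zOf ξ + 2 * (zOf ξ) ^ 2))
    (hη1def : ∀ ξ ∈ Set.Ioo (0 : ℝ) ξR,
      η1 ξ = (zOf ξ) ^ ((N - 1) / 4) * (1 - zOf ξ) ^ ((9 - N) / 4))
    (hqhat : ∀ ξ ∈ Set.Ioo (0 : ℝ) ξR,
      qhat ξ = (8 - N) / 2 * (zOf ξ) ^ ((N - 1) / 4) * (1 - zOf ξ) ^ (-((N + 3) / 4)))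
    (hφC2 : ContDiff ℝ 2 φ1) (hηC2 : ContDiff ℝ 2 η1)
    (hφODE : ∀ ξ ∈ Set.Ioo (0 : ℝ) ξR, -(deriv (deriv φ1) ξ) + Q ξ * φ1 ξ = lam1 * φ1 ξ)
    (hφpos : ∀ ξ ∈ Set.Ioo (0 : ℝ) ξR, 0 < φ1 ξ)
    (hφR : φ1 ξR = 0) (hφ'R : deriv φ1 ξR < 0)
    (hηODE : ∀ ξ ∈ Set.Ioo (0 : ℝ) ξR, -(deriv (deriv η1) ξ) + Q ξ * η1 ξ = qhat ξ)
    (hqpos : ∀ ξ ∈ Set.Ioo (0 : ℝ) ξR, 0 ≤ qhat ξ)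
    (hη0 : η1 0 = 0) (hη'0 : deriv η1 0 = 0)
    (hηpos : ∀ ξ ∈ Set.Ioc (0 : ℝ) ξR, 0 < η1 ξ) :
    0 < lam1 := by
  by_contra hlam
  push_neg at hlam
  -- Wronskian W = φ1' η1 - φ1 η1'
  set W : ℝ → ℝ := fun ξ => deriv φ1 ξ * η1 ξ - φ1 ξ * deriv η1 ξ with hW
  have hφ1' : ContDiff ℝ 1 (deriv φ1) :=
    (contDiff_succ_iff_deriv.mp (show ContDiff ℝ (1 + 1 : ℕ) φ1 from hφC2)).2.2
  have hη1' : ContDiff ℝ 1 (deriv η1) :=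
    (contDiff_succ_iff_deriv.mp (show ContDiff ℝ (1 + 1 : ℕ) η1 from hηC2)).2.2
  have hWdiff : ∀ ξ : ℝ, HasDerivAt W
      (deriv (deriv φ1) ξ * η1 ξ - φ1 ξ * deriv (deriv η1) ξ) ξ := by
    intro ξ
    have h1 : HasDerivAt (deriv φ1) (deriv (deriv φ1) ξ) ξ :=
      ((hφ1'.differentiable one_ne_zero) ξ).hasDerivAt
    have h2 : HasDerivAt η1 (deriv η1 ξ) ξ :=
      ((hηC2.differentiable two_ne_zero) ξ).hasDerivAt
    have h3 : HasDerivAt φ1 (deriv φ1 ξ) ξ :=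
      ((hφC2.differentiable two_ne_zero) ξ).hasDerivAt
    have h4 : HasDerivAt (deriv η1) (deriv (deriv η1) ξ) ξ :=
      ((hη1'.differentiable one_ne_zero) ξ).hasDerivAt
    have := (h1.mul h2).sub (h3.mul h4)
    exact this.congr_deriv (by ring)
  have hWderiv : ∀ ξ : ℝ, deriv W ξ =
      deriv (deriv φ1) ξ * η1 ξ - φ1 ξ * deriv (deriv η1) ξ := fun ξ =>
    (hWdiff ξ).deriv
  have hWmono : MonotoneOn W (Set.Icc 0 ξR) := by
    apply monotoneOn_of_deriv_nonneg (convex_Icc 0 ξR)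
    · exact fun ξ _ => ((hWdiff ξ).differentiableAt).continuousAt.continuousWithinAt
    · intro ξ _
      exact ((hWdiff ξ).differentiableAt).differentiableWithinAt
    · intro ξ hξ
      rw [interior_Icc] at hξ
      rw [hWderiv]
      have h1 := hφODE ξ hξ
      have h2 := hηODE ξ hξ
      have hφ'' : deriv (deriv φ1) ξ = Q ξ * φ1 ξ - lam1 * φ1 ξ := by linarith
      have hη'' : deriv (deriv η1) ξ = Q ξ * η1 ξ - qhat ξ := by linarith
      rw [hφ'', hη'']
      have hp := hφpos ξ hξ
      have he := hηpos ξ ⟨hξ.1, le_of_lt hξ.2⟩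
      have hq := hqpos ξ hξ
      nlinarith [mul_pos hp he, mul_nonneg hq hp.le, mul_nonneg (mul_nonneg (neg_nonneg.mpr hlam) hp.le) he.le]
  have hW0 : W 0 = 0 := by simp [hW, hη0, hη'0]
  have hWR : W ξR < 0 := by
    have he := hηpos ξR ⟨hξRpos, le_rfl⟩
    have : W ξR = deriv φ1 ξR * η1 ξR := by simp [hW, hφR]
    rw [this]
    exact mul_neg_of_neg_of_pos hφ'R he
  have := hWmono (Set.left_mem_Icc.mpr hξRpos.le) (Set.right_mem_Icc.mpr hξRpos.le) hξRpos.le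
  rw [hW0] at this
  linarith
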